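/- Let (X,μ) be a measure space and J,Q ⊆ (0,∞) with m_J = inf J > 0, M_J = sup J < ∞ and m_Q = inf Q > 0. Then IL_{J,Q}(X,μ) = L_{m_J,m_Q}(X,μ) ∩ L_{M_J,m_Q}(X,μ), and for every f ∈ IL_{J,Q}(X,μ), max{‖f‖_{L_{m_J,m_Q}}, ‖f‖_{L_{M_J,m_Q}}} ≤ sup_{p∈J,q∈Q} ‖f‖_{L_{p,q}} ≤ K · max{‖f‖_{L_{m_J,m_Q}}, ‖f‖_{L_{M_J,m_Q}}}, where K = 2^{1/m_Q} · max{1, (m_Q/m_J)^{1/m_Q}}. -/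

import Mathlib

open MeasureTheory Set ENNReal

noncomputable section

variable {X : Type*} [MeasurableSpace X]

/-- The distribution function `d_f(α) = μ {x : |f x| > α}`. -/
def distFun (μ : Measure X) (f : X → ℝ) (α : ℝ) : ℝ≥0∞ :=
  μ {x | α < |f x|}

/-- The decreasing rearrangement `f*(t) = inf {s > 0 : d_f(s) ≤ t}`, with `inf ∅ = ∞`. -/
def rearr (μ : Measure X) (f : X → ℝ) (t : ℝ) : ℝ≥0∞ :=
  ⨅ (s : ℝ) (_ : 0 < s ∧ distFun μ f s ≤ ENNReal.ofReal t), ENNReal.ofReal s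

/-- The Lorentz quasi-norm `‖f‖_{L_{p,q}}` (for `q = ∞` the weak norm `sup_t t^{1/p} f*(t)`). -/
def lorentzNorm (μ : Measure X) (f : X → ℝ) (p q : ℝ≥0∞) : ℝ≥0∞ :=
  if q = ∞ then ⨆ t ∈ Ioi (0 : ℝ), ENNReal.ofReal t ^ (1 / p).toReal * rearr μ f t
  else (∫⁻ t in Ioi (0 : ℝ),
      (ENNReal.ofReal t ^ (1 / p).toReal * rearr μ f t) ^ q.toReal / ENNReal.ofReal t) ^
      (1 / q.toReal)

lemma rearr_anti (μ : Measure X) (f : X → ℝ) : Antitone (rearr μ f) := fun t1 t2 h =>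
  le_iInf₂ fun s hs => iInf₂_le s ⟨hs.1, hs.2.trans (ofReal_le_ofReal h)⟩

lemma rearr_measurable (μ : Measure X) (f : X → ℝ) : Measurable (rearr μ f) :=
  (rearr_anti μ f).measurable

lemma integrand_measurable (μ : Measure X) (f : X → ℝ) (b c : ℝ) :
    Measurable (fun t : ℝ => ENNReal.ofReal t ^ b * rearr μ f t ^ c) :=
  (ENNReal.measurable_ofReal.pow_const _).mul ((rearr_measurable μ f).pow_const _)

lemma lint_rpow {c : ℝ} (hc : 0 < c) {t : ℝ} (ht : 0 < t) :
    ∫⁻ s in Ioo (0:ℝ) t, ENNReal.ofReal s ^ (c - 1) = ENNReal.ofReal (t ^ c / c) := by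
  have h1 : ∫⁻ s in Ioo (0:ℝ) t, ENNReal.ofReal s ^ (c - 1)
      = ∫⁻ s in Ioo (0:ℝ) t, ENNReal.ofReal (s ^ (c - 1)) := by
    refine setLIntegral_congr_fun measurableSet_Ioo (fun s hs => ?_)
    rw [← ENNReal.ofReal_rpow_of_pos hs.1]
  have hint : IntegrableOn (fun s : ℝ => s ^ (c - 1)) (Ioo 0 t) := by
    have := intervalIntegral.intervalIntegrable_rpow' (a := 0) (b := t) (by linarith : (-1:ℝ) < c - 1)
    rw [intervalIntegrable_iff_integrableOn_Ioo_of_le ht.le] at this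
    exact this
  rw [h1, ← ofReal_integral_eq_lintegral_ofReal hint]
  · congr 1
    rw [← integral_Ioc_eq_integral_Ioo, ← intervalIntegral.integral_of_le ht.le]
    rw [integral_rpow (Or.inl (by linarith))]
    rw [Real.zero_rpow (by linarith), sub_add_cancel]
    ring
  · exact (ae_restrict_iff' measurableSet_Ioo).2 (ae_of_all _ fun s hs => Real.rpow_nonneg hs.1.le _)


lemma integrand_eq {p q : ℝ≥0∞} (hp0 : p ≠ 0) (hp : p ≠ ∞) (hq : q ≠ ∞) {t : ℝ} (ht : 0 < t)
    (g : ℝ≥0∞) :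
    (ENNReal.ofReal t ^ (1 / p).toReal * g) ^ q.toReal / ENNReal.ofReal t
      = ENNReal.ofReal t ^ (q.toReal / p.toReal - 1) * g ^ q.toReal := by
  have hx0 : ENNReal.ofReal t ≠ 0 := by simp [ht, ht.le]
  have hx1 : ENNReal.ofReal t ≠ ∞ := ofReal_ne_top
  have ha : (1 / p).toReal = 1 / p.toReal := by
    rw [one_div, ENNReal.toReal_inv, one_div]
  rw [ha, ENNReal.mul_rpow_of_nonneg _ _ (ENNReal.toReal_nonneg), ← ENNReal.rpow_mul]
  rw [show 1 / p.toReal * q.toReal = q.toReal / p.toReal by ring]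
  rw [show q.toReal / p.toReal - 1 = q.toReal / p.toReal + (-1) by ring,
    ENNReal.rpow_add _ _ hx0 hx1, ENNReal.rpow_neg_one, div_eq_mul_inv]
  ring

lemma lorentzNorm_eq (μ : Measure X) (f : X → ℝ) {p q : ℝ≥0∞} (hp0 : p ≠ 0) (hp : p ≠ ∞)
    (hq : q ≠ ∞) :
    lorentzNorm μ f p q
      = (∫⁻ t in Ioi (0:ℝ),
          ENNReal.ofReal t ^ (q.toReal / p.toReal - 1) * rearr μ f t ^ q.toReal) ^ (1 / q.toReal) := by
  rw [lorentzNorm, if_neg hq]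
  congr 1
  refine setLIntegral_congr_fun measurableSet_Ioi (fun t ht => ?_)
  exact integrand_eq hp0 hp hq ht _

lemma weak_bound (μ : Measure X) (f : X → ℝ) {p q0 : ℝ≥0∞} (hp0 : p ≠ 0) (hp : p ≠ ∞)
    (hq00 : q0 ≠ 0) (hq0 : q0 ≠ ∞) {t : ℝ} (ht : 0 < t) :
    ENNReal.ofReal t ^ (1 / p).toReal * rearr μ f t
      ≤ (q0 / p) ^ (1 / q0.toReal) * lorentzNorm μ f p q0 := by
  set g := rearr μ f with hg
  have hpr : 0 < p.toReal := ENNReal.toReal_pos hp0 hp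
  have hqr : 0 < q0.toReal := ENNReal.toReal_pos hq00 hq0
  set c : ℝ := q0.toReal / p.toReal with hc
  have hcpos : 0 < c := div_pos hqr hpr
  set J : ℝ≥0∞ := ∫⁻ s in Ioi (0:ℝ),
      ENNReal.ofReal s ^ (c - 1) * g s ^ q0.toReal with hJ
  have key : g t ^ q0.toReal * ENNReal.ofReal (t ^ c / c) ≤ J := by
    have h1 : ∫⁻ s in Ioo (0:ℝ) t, ENNReal.ofReal s ^ (c - 1) * g t ^ q0.toReal ≤ J := by
      have h2 : ∫⁻ s in Ioo (0:ℝ) t, ENNReal.ofReal s ^ (c - 1) * g t ^ q0.toReal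
          ≤ ∫⁻ s in Ioo (0:ℝ) t, ENNReal.ofReal s ^ (c - 1) * g s ^ q0.toReal := by
        refine lintegral_mono_ae ((ae_restrict_iff' measurableSet_Ioo).2
          (ae_of_all _ fun s hs => ?_))
        gcongr
        exact rearr_anti μ f hs.2.le
      refine h2.trans ?_
      exact lintegral_mono_set (fun s hs => hs.1)
    refine le_trans (le_of_eq ?_) h1
    rw [lintegral_mul_const _ (ENNReal.measurable_ofReal.pow_const _), lint_rpow hcpos ht,
      mul_comm]
  have hfin : q0 / p ≠ ∞ := (ENNReal.div_lt_top hq0 hp0).ne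
  have hofc : ENNReal.ofReal c = q0 / p := by
    rw [hc, ← ENNReal.toReal_div, ENNReal.ofReal_toReal hfin]
  have lhs_eq : (ENNReal.ofReal t ^ (1 / p).toReal * g t) ^ q0.toReal
      = ENNReal.ofReal t ^ c * g t ^ q0.toReal := by
    rw [show (1/p).toReal = 1/p.toReal by rw [one_div, ENNReal.toReal_inv, one_div],
      ENNReal.mul_rpow_of_nonneg _ _ ENNReal.toReal_nonneg, ← ENNReal.rpow_mul,
      show 1/p.toReal * q0.toReal = c by rw [hc]; ring]
  have key2 : (ENNReal.ofReal t ^ (1 / p).toReal * g t) ^ q0.toReal ≤ (q0 / p) * J := by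
    rw [lhs_eq]
    rw [ENNReal.ofReal_div_of_pos hcpos, ← ENNReal.ofReal_rpow_of_pos ht] at key
    rw [← mul_div_assoc] at key
    rw [ENNReal.div_le_iff_le_mul (Or.inl (ENNReal.ofReal_pos.2 hcpos).ne')
      (Or.inl ENNReal.ofReal_ne_top)] at key
    calc ENNReal.ofReal t ^ c * g t ^ q0.toReal
        = g t ^ q0.toReal * ENNReal.ofReal t ^ c := mul_comm _ _
      _ ≤ J * ENNReal.ofReal c := key
      _ = (q0 / p) * J := by rw [hofc, mul_comm]
  have h3 := ENNReal.rpow_le_rpow key2 (by positivity : (0:ℝ) ≤ 1 / q0.toReal)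
  rw [← ENNReal.rpow_mul, mul_one_div, div_self hqr.ne', ENNReal.rpow_one,
    ENNReal.mul_rpow_of_nonneg _ _ (by positivity : (0:ℝ) ≤ 1 / q0.toReal)] at h3
  rw [lorentzNorm_eq μ f hp0 hp hq0, ← hc, ← hJ]
  exact h3

lemma lorentzNorm_mono_q (μ : Measure X) (f : X → ℝ) {p q0 q : ℝ≥0∞} (hp0 : p ≠ 0) (hp : p ≠ ∞)
    (hq00 : q0 ≠ 0) (hle : q0 ≤ q) (hq : q ≠ ∞) :
    lorentzNorm μ f p q ≤ (q0 / p) ^ (1 / q0.toReal - 1 / q.toReal) * lorentzNorm μ f p q0 := by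
  have hq0 : q0 ≠ ∞ := (hle.trans_lt (lt_top_iff_ne_top.2 hq)).ne
  have hq0r : 0 < q0.toReal := ENNReal.toReal_pos hq00 hq0
  have hler : q0.toReal ≤ q.toReal := ENNReal.toReal_mono hq hle
  have hqr : 0 < q.toReal := lt_of_lt_of_le hq0r hler
  set g := rearr μ f with hg
  set u : ℝ → ℝ≥0∞ := fun t => ENNReal.ofReal t ^ (1/p).toReal * g t with hu
  set N0 := lorentzNorm μ f p q0 with hN0
  set C := q0 / p with hC
  set M := C ^ (1/q0.toReal) * N0 with hM
  set d := q.toReal - q0.toReal with hd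
  have hd0 : 0 ≤ d := sub_nonneg.2 hler
  set I0 : ℝ≥0∞ := ∫⁻ t in Ioi (0:ℝ), u t ^ q0.toReal / ENNReal.ofReal t with hI0
  set Iq : ℝ≥0∞ := ∫⁻ t in Ioi (0:ℝ), u t ^ q.toReal / ENNReal.ofReal t with hIq
  have hNq : lorentzNorm μ f p q = Iq ^ (1/q.toReal) := by rw [lorentzNorm, if_neg hq]
  have hN0' : N0 = I0 ^ (1/q0.toReal) := by rw [hN0, lorentzNorm, if_neg hq0]
  have hI0N : I0 = N0 ^ q0.toReal := by
    rw [hN0', ← ENNReal.rpow_mul, one_div, inv_mul_cancel₀ hq0r.ne', ENNReal.rpow_one]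
  have humeas : Measurable u :=
    (ENNReal.measurable_ofReal.pow_const _).mul (rearr_measurable μ f)
  have hIle : Iq ≤ M ^ d * I0 := by
    rw [hIq, hI0, ← lintegral_const_mul _ (f := fun t => u t ^ q0.toReal / ENNReal.ofReal t) ((humeas.pow_const _).div ENNReal.measurable_ofReal)]
    refine lintegral_mono_ae ((ae_restrict_iff' measurableSet_Ioi).2 (ae_of_all _ fun t ht => ?_))
    calc u t ^ q.toReal / ENNReal.ofReal t
        = (u t ^ d * u t ^ q0.toReal) / ENNReal.ofReal t := by
          rw [← ENNReal.rpow_add_of_nonneg _ _ hd0 hq0r.le, hd, sub_add_cancel]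
      _ ≤ (M ^ d * u t ^ q0.toReal) / ENNReal.ofReal t := by
          gcongr
          exact weak_bound μ f hp0 hp hq00 hq0 ht
      _ = M ^ d * (u t ^ q0.toReal / ENNReal.ofReal t) := by rw [mul_div_assoc]
  calc lorentzNorm μ f p q = Iq ^ (1/q.toReal) := hNq
    _ ≤ (M ^ d * I0) ^ (1/q.toReal) := ENNReal.rpow_le_rpow hIle (by positivity)
    _ = M ^ (d * (1/q.toReal)) * I0 ^ (1/q.toReal) := by
        rw [ENNReal.mul_rpow_of_nonneg _ _ (by positivity), ← ENNReal.rpow_mul]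
    _ = C ^ ((1/q0.toReal) * (d * (1/q.toReal)))
          * (N0 ^ (d * (1/q.toReal)) * N0 ^ (q0.toReal * (1/q.toReal))) := by
        rw [hI0N, ← ENNReal.rpow_mul, hM,
          ENNReal.mul_rpow_of_nonneg _ _ (by positivity : (0:ℝ) ≤ d * (1/q.toReal)),
          ← ENNReal.rpow_mul, mul_assoc]
    _ = C ^ (1/q0.toReal - 1/q.toReal) * N0 := by
        rw [← ENNReal.rpow_add_of_nonneg _ _ (by positivity) (by positivity),
          show d * (1/q.toReal) + q0.toReal * (1/q.toReal) = 1 by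
            rw [hd]; field_simp; ring,
          show 1/q0.toReal * (d * (1/q.toReal)) = 1/q0.toReal - 1/q.toReal by
            rw [hd]; field_simp,
          ENNReal.rpow_one]

lemma lorentzNorm_interp_p (μ : Measure X) (f : X → ℝ) {p0 p p1 q : ℝ≥0∞}
    (hp00 : p0 ≠ 0) (hp1 : p1 ≠ ∞) (h0 : p0 ≤ p) (h1 : p ≤ p1) (hq0 : q ≠ 0) (hq : q ≠ ∞) :
    lorentzNorm μ f p q
      ≤ 2 ^ (1/q.toReal) * max (lorentzNorm μ f p0 q) (lorentzNorm μ f p1 q) := by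
  have hqr : 0 < q.toReal := ENNReal.toReal_pos hq0 hq
  set g := rearr μ f with hg
  set a : ℝ := (1/p).toReal
  set a0 : ℝ := (1/p0).toReal
  set a1 : ℝ := (1/p1).toReal
  have hp0ne : p ≠ 0 := fun h => hp00 (le_antisymm (h ▸ h0) zero_le)
  have ha0 : a ≤ a0 := by
    refine ENNReal.toReal_mono (by simp [one_div, hp00]) ?_
    exact ENNReal.div_le_div_left h0 1
  have ha1 : a1 ≤ a := by
    refine ENNReal.toReal_mono (by simp [one_div, hp0ne]) ?_
    exact ENNReal.div_le_div_left h1 1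
  set F : ℝ → ℝ → ℝ≥0∞ := fun b t =>
    (ENNReal.ofReal t ^ b * g t) ^ q.toReal / ENNReal.ofReal t with hF
  have hNdef : ∀ r : ℝ≥0∞, lorentzNorm μ f r q = (∫⁻ t in Ioi (0:ℝ), F (1/r).toReal t) ^ (1/q.toReal) :=
    fun r => by rw [lorentzNorm, if_neg hq]
  have hsplit : (∫⁻ t in Ioi (0:ℝ), F a t)
      ≤ (∫⁻ t in Ioi (0:ℝ), F a1 t) + (∫⁻ t in Ioi (0:ℝ), F a0 t) := by
    have hunion : Ioc (0:ℝ) 1 ∪ Ioi 1 = Ioi 0 := Ioc_union_Ioi_eq_Ioi zero_le_one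
    rw [show (∫⁻ t in Ioi (0:ℝ), F a t)
        = (∫⁻ t in Ioc (0:ℝ) 1, F a t) + (∫⁻ t in Ioi (1:ℝ), F a t) by
      rw [← lintegral_union measurableSet_Ioi (Ioc_disjoint_Ioi le_rfl), hunion]]
    refine add_le_add ?_ ?_
    · calc ∫⁻ t in Ioc (0:ℝ) 1, F a t
          ≤ ∫⁻ t in Ioc (0:ℝ) 1, F a1 t := by
            refine lintegral_mono_ae ((ae_restrict_iff' measurableSet_Ioc).2
              (ae_of_all _ fun t ht => ?_))
            simp only [hF]
            refine ENNReal.div_le_div_right (ENNReal.rpow_le_rpow ?_ hqr.le) _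
            refine mul_le_mul_left ?_ _
            exact ENNReal.rpow_le_rpow_of_exponent_ge (ENNReal.ofReal_le_one.2 ht.2) ha1
        _ ≤ ∫⁻ t in Ioi (0:ℝ), F a1 t := lintegral_mono_set Ioc_subset_Ioi_self
    · calc ∫⁻ t in Ioi (1:ℝ), F a t
          ≤ ∫⁻ t in Ioi (1:ℝ), F a0 t := by
            refine lintegral_mono_ae ((ae_restrict_iff' measurableSet_Ioi).2
              (ae_of_all _ fun t ht => ?_))
            simp only [hF]
            refine ENNReal.div_le_div_right (ENNReal.rpow_le_rpow ?_ hqr.le) _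
            refine mul_le_mul_left ?_ _
            exact ENNReal.rpow_le_rpow_of_exponent_le (ENNReal.one_le_ofReal.2 ht.le) ha0
        _ ≤ ∫⁻ t in Ioi (0:ℝ), F a0 t := lintegral_mono_set (Ioi_subset_Ioi zero_le_one)
  calc lorentzNorm μ f p q = (∫⁻ t in Ioi (0:ℝ), F a t) ^ (1/q.toReal) := hNdef p
    _ ≤ ((∫⁻ t in Ioi (0:ℝ), F a1 t) + (∫⁻ t in Ioi (0:ℝ), F a0 t)) ^ (1/q.toReal) :=
        ENNReal.rpow_le_rpow hsplit (by positivity)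
    _ ≤ (2 * max (∫⁻ t in Ioi (0:ℝ), F a0 t) (∫⁻ t in Ioi (0:ℝ), F a1 t)) ^ (1/q.toReal) := by
        refine ENNReal.rpow_le_rpow ?_ (by positivity)
        rw [two_mul]
        exact add_le_add (le_max_right _ _) (le_max_left _ _)
    _ = 2 ^ (1/q.toReal)
          * max (∫⁻ t in Ioi (0:ℝ), F a0 t) (∫⁻ t in Ioi (0:ℝ), F a1 t) ^ (1/q.toReal) := by
        rw [ENNReal.mul_rpow_of_nonneg _ _ (by positivity : (0:ℝ) ≤ 1/q.toReal)]
    _ = 2 ^ (1/q.toReal) * max (lorentzNorm μ f p0 q) (lorentzNorm μ f p1 q) := by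
        rw [hNdef p0, hNdef p1]
        congr 1
        exact (ENNReal.monotone_rpow_of_nonneg (by positivity : (0:ℝ) ≤ 1/q.toReal)).map_max

lemma tendsto_rpow_exp' {x : ℝ≥0∞} (hx0 : x ≠ 0) (hx : x ≠ ∞) {e : ℕ → ℝ} {e0 : ℝ}
    (he : Filter.Tendsto e Filter.atTop (nhds e0)) :
    Filter.Tendsto (fun n => x ^ e n) Filter.atTop (nhds (x ^ e0)) := by
  have hxr : 0 < x.toReal := ENNReal.toReal_pos hx0 hx
  have h1 : ∀ y : ℝ, x ^ y = ENNReal.ofReal (x.toReal ^ y) := fun y => by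
    rw [← ENNReal.ofReal_rpow_of_pos hxr, ENNReal.ofReal_toReal hx]
  simp only [h1]
  refine (ENNReal.continuous_ofReal.continuousAt).tendsto.comp ?_
  have hc : ContinuousAt (fun p : ℝ × ℝ => p.1 ^ p.2) (x.toReal, e0) :=
    Real.continuousAt_rpow _ (Or.inl hxr.ne')
  exact hc.tendsto.comp ((tendsto_const_nhds (x := x.toReal)).prodMk_nhds he)

lemma tendsto_rpow_exp {x : ℝ≥0∞} {e : ℕ → ℝ} {e0 : ℝ}
    (he : Filter.Tendsto e Filter.atTop (nhds e0)) (he0 : 0 < e0) :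
    Filter.Tendsto (fun n => x ^ e n) Filter.atTop (nhds (x ^ e0)) := by
  have hev : ∀ᶠ n in Filter.atTop, 0 < e n := he.eventually (eventually_gt_nhds he0)
  rcases eq_or_ne x 0 with rfl | hx0
  · rw [ENNReal.zero_rpow_of_pos he0]
    refine Filter.Tendsto.congr' ?_ tendsto_const_nhds
    exact hev.mono fun n hn => (ENNReal.zero_rpow_of_pos hn).symm
  rcases eq_or_ne x ∞ with rfl | hx
  · rw [ENNReal.top_rpow_of_pos he0]
    refine Filter.Tendsto.congr' ?_ tendsto_const_nhds
    exact hev.mono fun n hn => (ENNReal.top_rpow_of_pos hn).symm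
  exact tendsto_rpow_exp' hx0 hx he

lemma fatou_bound (μ : Measure X) (f : X → ℝ) {p q : ℕ → ℝ≥0∞} {pl q0 S : ℝ≥0∞}
    (hpmem : ∀ n, p n ∈ Ioo (0:ℝ≥0∞) ∞) (hqmem : ∀ n, q n ∈ Ioo (0:ℝ≥0∞) ∞)
    (hpl : pl ∈ Ioo (0:ℝ≥0∞) ∞) (hq0 : q0 ∈ Ioo (0:ℝ≥0∞) ∞)
    (hp : Filter.Tendsto p Filter.atTop (nhds pl))
    (hq : Filter.Tendsto q Filter.atTop (nhds q0))
    (hS : ∀ n, lorentzNorm μ f (p n) (q n) ≤ S) :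
    lorentzNorm μ f pl q0 ≤ S := by
  rcases eq_or_ne S ∞ with rfl | hSfin
  · exact le_top
  set g := rearr μ f with hg
  have hq0r : 0 < q0.toReal := ENNReal.toReal_pos hq0.1.ne' hq0.2.ne
  have hplr : 0 < pl.toReal := ENNReal.toReal_pos hpl.1.ne' hpl.2.ne
  have hqr : Filter.Tendsto (fun n => (q n).toReal) Filter.atTop (nhds q0.toReal) :=
    (ENNReal.tendsto_toReal hq0.2.ne).comp hq
  have hpr : Filter.Tendsto (fun n => (p n).toReal) Filter.atTop (nhds pl.toReal) :=
    (ENNReal.tendsto_toReal hpl.2.ne).comp hp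
  set b : ℕ → ℝ := fun n => (q n).toReal / (p n).toReal - 1 with hb
  set bl : ℝ := q0.toReal / pl.toReal - 1 with hbl
  have hbt : Filter.Tendsto b Filter.atTop (nhds bl) :=
    (hqr.div hpr hplr.ne').sub tendsto_const_nhds
  set J : ℕ → ℝ≥0∞ := fun n => ∫⁻ t in Ioi (0:ℝ),
      ENNReal.ofReal t ^ b n * g t ^ (q n).toReal with hJ
  set Jl : ℝ≥0∞ := ∫⁻ t in Ioi (0:ℝ), ENNReal.ofReal t ^ bl * g t ^ q0.toReal with hJl
  have hpt : ∀ t : ℝ, 0 < t → Filter.Tendsto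
      (fun n => ENNReal.ofReal t ^ b n * g t ^ (q n).toReal) Filter.atTop
      (nhds (ENNReal.ofReal t ^ bl * g t ^ q0.toReal)) := by
    intro t ht
    have hx0 : ENNReal.ofReal t ≠ 0 := by simp [ht, ht.le]
    have hA := tendsto_rpow_exp' hx0 ENNReal.ofReal_ne_top hbt
    have hB := tendsto_rpow_exp (x := g t) hqr hq0r
    refine ENNReal.Tendsto.mul hA (Or.inl ?_) hB (Or.inr ?_)
    · simp [ENNReal.rpow_eq_zero_iff, hx0, ENNReal.ofReal_ne_top]
    · simp [ENNReal.rpow_eq_top_iff, hx0, ENNReal.ofReal_ne_top]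
  have hfatou : Jl ≤ Filter.liminf J Filter.atTop := by
    have h1 : Jl = ∫⁻ t in Ioi (0:ℝ), Filter.liminf
        (fun n => ENNReal.ofReal t ^ b n * g t ^ (q n).toReal) Filter.atTop := by
      refine setLIntegral_congr_fun measurableSet_Ioi (fun t ht => ?_)
      exact ((hpt t ht).liminf_eq).symm
    rw [h1]
    exact lintegral_liminf_le fun n => integrand_measurable μ f _ _
  have hJS : ∀ n, J n ≤ S ^ (q n).toReal := by
    intro n
    have hN := hS n
    rw [lorentzNorm_eq μ f (hpmem n).1.ne' (hpmem n).2.ne (hqmem n).2.ne] at hN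
    have hqnr : 0 < (q n).toReal := ENNReal.toReal_pos (hqmem n).1.ne' (hqmem n).2.ne
    have := ENNReal.rpow_le_rpow hN hqnr.le
    rwa [← ENNReal.rpow_mul, one_div, inv_mul_cancel₀ hqnr.ne', ENNReal.rpow_one] at this
  have hlim : Filter.liminf (fun n => S ^ (q n).toReal) Filter.atTop = S ^ q0.toReal :=
    (tendsto_rpow_exp hqr hq0r).liminf_eq
  have hJlS : Jl ≤ S ^ q0.toReal := by
    refine hfatou.trans ?_
    rw [← hlim]
    exact Filter.liminf_le_liminf (Filter.Eventually.of_forall hJS)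
  rw [lorentzNorm_eq μ f hpl.1.ne' hpl.2.ne hq0.2.ne]
  calc (Jl) ^ (1/q0.toReal) ≤ (S ^ q0.toReal) ^ (1/q0.toReal) :=
        ENNReal.rpow_le_rpow hJlS (by positivity)
    _ = S := by rw [← ENNReal.rpow_mul, mul_one_div, div_self hq0r.ne', ENNReal.rpow_one]

/-- The Lorentz space `L_{p,q}(X, μ)`, as the set of measurable functions with
finite Lorentz quasi-norm. -/
def Lorentz (μ : Measure X) (p q : ℝ≥0∞) : Set (X → ℝ) :=
  {f | Measurable f ∧ lorentzNorm μ f p q < ∞}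

/-- `IL_{J,Q}(X,μ)`: functions in every `L_{p,q}`, `p ∈ J`, `q ∈ Q`, with uniformly
bounded norms. -/
def ILJQ (μ : Measure X) (J Q : Set ℝ≥0∞) : Set (X → ℝ) :=
  {f | (∀ p ∈ J, ∀ q ∈ Q, f ∈ Lorentz μ p q) ∧
    (⨆ p ∈ J, ⨆ q ∈ Q, lorentzNorm μ f p q) < ∞}

/-- `IL_{J,Q} = L_{m_J,m_Q} ∩ L_{M_J,m_Q}`, with
`max{‖f‖_{L_{m_J,m_Q}}, ‖f‖_{L_{M_J,m_Q}}} ≤ sup_{p∈J,q∈Q} ‖f‖_{L_{p,q}}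
≤ K max{‖f‖_{L_{m_J,m_Q}}, ‖f‖_{L_{M_J,m_Q}}}` where
`K = 2^{1/m_Q} max{1, (m_Q/m_J)^{1/m_Q}}`. -/
theorem stmt13 (μ : Measure X) (J Q : Set ℝ≥0∞)
    (hJne : J.Nonempty) (hJ : J ⊆ Ioo 0 ∞) (hmJ : 0 < sInf J) (hMJ : sSup J ≠ ∞)
    (hQne : Q.Nonempty) (hQ : Q ⊆ Ioo 0 ∞) (hmQ : 0 < sInf Q) :
    ILJQ μ J Q = Lorentz μ (sInf J) (sInf Q) ∩ Lorentz μ (sSup J) (sInf Q) ∧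
    ∀ f ∈ ILJQ μ J Q,
      max (lorentzNorm μ f (sInf J) (sInf Q)) (lorentzNorm μ f (sSup J) (sInf Q)) ≤
        (⨆ p ∈ J, ⨆ q ∈ Q, lorentzNorm μ f p q) ∧
      (⨆ p ∈ J, ⨆ q ∈ Q, lorentzNorm μ f p q) ≤
        ((2 : ℝ≥0∞) ^ (1 / sInf Q).toReal *
            max 1 ((sInf Q / sInf J) ^ (1 / sInf Q).toReal)) *
          max (lorentzNorm μ f (sInf J) (sInf Q)) (lorentzNorm μ f (sSup J) (sInf Q)) := by
    classical
  set p0 := sInf J with hp0def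
  set p1 := sSup J with hp1def
  set q0 := sInf Q with hq0def
  obtain ⟨pb, hpb⟩ := id hJne
  obtain ⟨qb, hqb⟩ := id hQne
  have hp00 : p0 ≠ 0 := hmJ.ne'
  have hp1top : p1 ≠ ∞ := hMJ
  have hp01 : p0 ≤ p1 := sInf_le_sSup hJne
  have hp0top : p0 ≠ ∞ := (hp01.trans_lt (lt_top_iff_ne_top.2 hp1top)).ne
  have hp10 : p1 ≠ 0 := fun h => hp00 (le_antisymm (h ▸ hp01) zero_le)
  have hq00 : q0 ≠ 0 := hmQ.ne'
  have hq0top : q0 ≠ ∞ := ((sInf_le hqb).trans_lt (hQ hqb).2).ne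
  have hq0r : 0 < q0.toReal := ENNReal.toReal_pos hq00 hq0top
  have he : (1 / q0).toReal = 1 / q0.toReal := by
    rw [one_div, ENNReal.toReal_inv, one_div]
  set K : ℝ≥0∞ := (2 : ℝ≥0∞) ^ (1 / q0).toReal * max 1 ((q0 / p0) ^ (1 / q0).toReal) with hK
  have hKfin : K ≠ ∞ := by
    refine ENNReal.mul_ne_top ?_ ?_
    · exact (ENNReal.rpow_lt_top_of_nonneg (he ▸ by positivity) (by norm_num)).ne
    · refine (max_lt one_lt_top ?_).ne
      exact ENNReal.rpow_lt_top_of_nonneg (he ▸ by positivity)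
        (ENNReal.div_lt_top hq0top hp00).ne
  -- the upper bound, valid for any f
  have hupper : ∀ (f : X → ℝ), ∀ p ∈ J, ∀ q ∈ Q, lorentzNorm μ f p q
      ≤ K * max (lorentzNorm μ f p0 q0) (lorentzNorm μ f p1 q0) := by
    intro f p hp q hq
    have hppos : p ≠ 0 := fun h => hp00 (le_antisymm (h ▸ sInf_le hp) zero_le)
    have hptop : p ≠ ∞ := (hJ hp).2.ne
    have hqtop : q ≠ ∞ := (hQ hq).2.ne
    have hq0le : q0 ≤ q := sInf_le hq
    have hler : q0.toReal ≤ q.toReal := ENNReal.toReal_mono hqtop hq0le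
    have hqr : 0 < q.toReal := lt_of_lt_of_le hq0r hler
    have hd0 : 0 ≤ 1 / q0.toReal - 1 / q.toReal := by
      have := one_div_le_one_div_of_le hq0r hler
      linarith
    have step1 := lorentzNorm_mono_q μ f hppos hptop hq00 hq0le hqtop
    have step2 := lorentzNorm_interp_p μ f hp00 hp1top (sInf_le hp) (le_sSup hp) hq00 hq0top
    have hconst : (q0 / p) ^ (1 / q0.toReal - 1 / q.toReal)
        ≤ max 1 ((q0 / p0) ^ (1 / q0).toReal) := by
      rcases le_or_gt (q0 / p) 1 with hC | hC
      · exact le_max_of_le_left (ENNReal.rpow_le_one hC hd0)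
      · refine le_max_of_le_right ?_
        calc (q0 / p) ^ (1 / q0.toReal - 1 / q.toReal)
            ≤ (q0 / p) ^ (1 / q0.toReal) := by
              refine ENNReal.rpow_le_rpow_of_exponent_le hC.le ?_
              have : 0 ≤ 1 / q.toReal := by positivity
              linarith
          _ ≤ (q0 / p0) ^ (1 / q0.toReal) :=
              ENNReal.rpow_le_rpow (ENNReal.div_le_div_left (sInf_le hp) q0) (by positivity)
          _ = (q0 / p0) ^ (1 / q0).toReal := by rw [he]
    calc lorentzNorm μ f p q
        ≤ (q0 / p) ^ (1 / q0.toReal - 1 / q.toReal) * lorentzNorm μ f p q0 := step1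
      _ ≤ max 1 ((q0 / p0) ^ (1 / q0).toReal)
            * ((2:ℝ≥0∞) ^ (1 / q0.toReal)
              * max (lorentzNorm μ f p0 q0) (lorentzNorm μ f p1 q0)) :=
          mul_le_mul' hconst step2
      _ = K * max (lorentzNorm μ f p0 q0) (lorentzNorm μ f p1 q0) := by
          rw [hK, he, ← mul_assoc, mul_comm (max 1 _) ((2:ℝ≥0∞) ^ (1/q0.toReal))]
  -- the lower bounds, valid for any f
  have hq0mem : q0 ∈ Ioo (0:ℝ≥0∞) ∞ := ⟨hmQ, lt_top_iff_ne_top.2 hq0top⟩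
  obtain ⟨uQ, _, huQt, huQm⟩ := exists_seq_tendsto_sInf hQne (OrderBot.bddBelow Q)
  have hlow0 : ∀ f : X → ℝ, lorentzNorm μ f p0 q0 ≤ ⨆ p ∈ J, ⨆ q ∈ Q, lorentzNorm μ f p q := by
    intro f
    obtain ⟨uJ, _, huJt, huJm⟩ := exists_seq_tendsto_sInf hJne (OrderBot.bddBelow J)
    refine fatou_bound μ f (fun n => hJ (huJm n)) (fun n => hQ (huQm n))
      ⟨hmJ, lt_top_iff_ne_top.2 hp0top⟩ hq0mem huJt huQt (fun n => ?_)
    calc lorentzNorm μ f (uJ n) (uQ n)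
        ≤ ⨆ q ∈ Q, lorentzNorm μ f (uJ n) q :=
          le_iSup₂ (f := fun q (_ : q ∈ Q) => lorentzNorm μ f (uJ n) q) (uQ n) (huQm n)
      _ ≤ ⨆ p ∈ J, ⨆ q ∈ Q, lorentzNorm μ f p q :=
          le_iSup₂ (f := fun p (_ : p ∈ J) => ⨆ q ∈ Q, lorentzNorm μ f p q) (uJ n) (huJm n)
  have hlow1 : ∀ f : X → ℝ, lorentzNorm μ f p1 q0 ≤ ⨆ p ∈ J, ⨆ q ∈ Q, lorentzNorm μ f p q := by
    intro f
    obtain ⟨uJ, _, huJt, huJm⟩ := exists_seq_tendsto_sSup hJne (OrderTop.bddAbove J)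
    refine fatou_bound μ f (fun n => hJ (huJm n)) (fun n => hQ (huQm n))
      ⟨lt_of_lt_of_le hmJ hp01, lt_top_iff_ne_top.2 hp1top⟩ hq0mem huJt huQt (fun n => ?_)
    calc lorentzNorm μ f (uJ n) (uQ n)
        ≤ ⨆ q ∈ Q, lorentzNorm μ f (uJ n) q :=
          le_iSup₂ (f := fun q (_ : q ∈ Q) => lorentzNorm μ f (uJ n) q) (uQ n) (huQm n)
      _ ≤ ⨆ p ∈ J, ⨆ q ∈ Q, lorentzNorm μ f p q :=
          le_iSup₂ (f := fun p (_ : p ∈ J) => ⨆ q ∈ Q, lorentzNorm μ f p q) (uJ n) (huJm n)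
  have hsupK : ∀ f : X → ℝ, (⨆ p ∈ J, ⨆ q ∈ Q, lorentzNorm μ f p q)
      ≤ K * max (lorentzNorm μ f p0 q0) (lorentzNorm μ f p1 q0) :=
    fun f => iSup₂_le fun p hp => iSup₂_le fun q hq => hupper f p hp q hq
  constructor
  · ext f
    constructor
    · rintro ⟨hmem, hsup⟩
      have hmeas : Measurable f := (hmem pb hpb qb hqb).1
      exact ⟨⟨hmeas, lt_of_le_of_lt (hlow0 f) hsup⟩, ⟨hmeas, lt_of_le_of_lt (hlow1 f) hsup⟩⟩
    · rintro ⟨⟨hmeas, h0⟩, ⟨-, h1⟩⟩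
      have hfin : K * max (lorentzNorm μ f p0 q0) (lorentzNorm μ f p1 q0) < ∞ :=
        ENNReal.mul_lt_top (lt_top_iff_ne_top.2 hKfin) (max_lt h0 h1)
      exact ⟨fun p hp q hq => ⟨hmeas, lt_of_le_of_lt (hupper f p hp q hq) hfin⟩,
        lt_of_le_of_lt (hsupK f) hfin⟩
  · intro f _
    exact ⟨max_le (hlow0 f) (hlow1 f), hsupK f⟩
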